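/- Let E(n,d) denote the number of d-element subsets S of {1,...,n} such that |S ∩ {1,...,2k-2}| ≤ k-1 for every k with 2 ≤ k ≤ d. Then for n ≥ 2d-1 and d ≥ 2, E(n,d) = E(n-1,d) + E(n-1,d-1). -/
import Mathlib


open scoped Classical

/-- `E n d` is the number of `d`-element subsets `S` of `{1,...,n}` such that
`|S ∩ {1,...,2k-2}| ≤ k-1` for every `k` with `2 ≤ k ≤ d`. -/
noncomputable def E (n d : ℕ) : ℕ :=
  ((Finset.powersetCard d (Finset.Icc 1 n)).filter fun S =>
    ∀ k ∈ Finset.Icc 2 d, (S ∩ Finset.Icc 1 (2 * k - 2)).card ≤ k - 1).card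

theorem E_recurrence (n d : ℕ) (hd : 2 ≤ d) (hn : 2 * d - 1 ≤ n) :
    E n d = E (n - 1) d + E (n - 1) (d - 1) := by
  classical
  have key := Finset.card_filter_add_card_filter_not
    (s := (Finset.powersetCard d (Finset.Icc 1 n)).filter fun S =>
      ∀ k ∈ Finset.Icc 2 d, (S ∩ Finset.Icc 1 (2 * k - 2)).card ≤ k - 1)
    (p := fun S => n ∈ S)
  rw [E, ← key, add_comm]
  congr 1
  · -- n ∉ S case ↔ E (n-1) d
    rw [E]
    congr 1
    ext S
    simp only [Finset.mem_filter, Finset.mem_powersetCard]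
    constructor
    · rintro ⟨⟨⟨hsub, hcard⟩, hcond⟩, hnS⟩
      refine ⟨⟨fun x hx => ?_, hcard⟩, hcond⟩
      have h1 := hsub hx
      simp only [Finset.mem_Icc] at h1 ⊢
      have hxn : x ≠ n := fun h => hnS (h ▸ hx)
      omega
    · rintro ⟨⟨hsub, hcard⟩, hcond⟩
      have hnS : n ∉ S := fun h => by
        have := hsub h; simp only [Finset.mem_Icc] at this; omega
      refine ⟨⟨⟨fun x hx => ?_, hcard⟩, hcond⟩, hnS⟩
      have := hsub hx
      simp only [Finset.mem_Icc] at this ⊢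
      omega
  · -- n ∈ S case ↔ E (n-1) (d-1)
    rw [E]
    apply Finset.card_bij (fun S _ => S.erase n)
    · intro S hS
      simp only [Finset.mem_filter, Finset.mem_powersetCard] at hS ⊢
      obtain ⟨⟨⟨hsub, hcard⟩, hcond⟩, hnS⟩ := hS
      refine ⟨⟨fun x hx => ?_, ?_⟩, ?_⟩
      · have hx' := Finset.mem_of_mem_erase hx
        have hne := Finset.ne_of_mem_erase hx
        have := hsub hx'
        simp only [Finset.mem_Icc] at this ⊢
        omega
      · rw [Finset.card_erase_of_mem hnS, hcard]
      · intro k hk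
        simp only [Finset.mem_Icc] at hk
        have heq : S.erase n ∩ Finset.Icc 1 (2 * k - 2) = S ∩ Finset.Icc 1 (2 * k - 2) := by
          ext x
          simp only [Finset.mem_inter, Finset.mem_erase, Finset.mem_Icc]
          constructor
          · rintro ⟨⟨_, h⟩, h2⟩; exact ⟨h, h2⟩
          · rintro ⟨h1, h2⟩; exact ⟨⟨by omega, h1⟩, h2⟩
        rw [heq]
        exact hcond k (by simp only [Finset.mem_Icc]; omega)
    · intro S hS T hT h
      simp only [Finset.mem_filter] at hS hT
      have := congrArg (insert n) h
      rwa [Finset.insert_erase hS.2, Finset.insert_erase hT.2] at this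
    · intro S' hS'
      simp only [Finset.mem_filter, Finset.mem_powersetCard] at hS'
      obtain ⟨⟨hsub, hcard⟩, hcond⟩ := hS'
      have hnS' : n ∉ S' := fun h => by
        have := hsub h; simp only [Finset.mem_Icc] at this; omega
      refine ⟨insert n S', ?_, ?_⟩
      · simp only [Finset.mem_filter, Finset.mem_powersetCard]
        refine ⟨⟨⟨fun x hx => ?_, ?_⟩, ?_⟩, Finset.mem_insert_self n S'⟩
        · rcases Finset.mem_insert.1 hx with rfl | hx
          · simp only [Finset.mem_Icc]; omega
          · have := hsub hx
            simp only [Finset.mem_Icc] at this ⊢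
            omega
        · rw [Finset.card_insert_of_notMem hnS', hcard]; omega
        · intro k hk
          simp only [Finset.mem_Icc] at hk
          have heq : insert n S' ∩ Finset.Icc 1 (2 * k - 2) = S' ∩ Finset.Icc 1 (2 * k - 2) := by
            ext x
            simp only [Finset.mem_inter, Finset.mem_insert, Finset.mem_Icc]
            constructor
            · rintro ⟨rfl | h1, h2⟩
              · omega
              · exact ⟨h1, h2⟩
            · rintro ⟨h1, h2⟩; exact ⟨Or.inr h1, h2⟩
          rw [heq]
          by_cases hkd : k ≤ d - 1
          · exact hcond k (by simp only [Finset.mem_Icc]; omega)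
          · calc (S' ∩ Finset.Icc 1 (2 * k - 2)).card ≤ S'.card :=
                  Finset.card_le_card (Finset.inter_subset_left)
              _ = d - 1 := hcard
              _ ≤ k - 1 := by omega
      · exact Finset.erase_insert hnS'
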